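/- Let Z be a T1 topological space. Then Z is connected and first-countable if and only if there exist a connected metrizable topological space M and a surjective map g : M → Z that is continuous and open. -/

import Mathlib

open Set Topology TopologicalSpace

universe u

namespace Statement11Aux

open scoped Classical

variable {S : Type u}

/-- The hedgehog over an index type `S`: a center point together with a spine `(0,∞)`
for every element of `S`. -/
def Hh (S : Type u) : Type u := Option (S × {t : ℝ // 0 < t})

namespace Hh

/-- Height of a point of the hedgehog. -/
def h (x : Hh S) : ℝ := Option.elim x 0 fun a => a.2.1

/-- Spine on which a point of the hedgehog lies. -/
def spn (x : Hh S) : Option S := Option.map Prod.fst x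

@[simp] lemma h_none : h (none : Hh S) = 0 := rfl
@[simp] lemma spn_none : spn (none : Hh S) = none := rfl
@[simp] lemma h_some (a : S × {t : ℝ // 0 < t}) : h (some a : Hh S) = a.2.1 := rfl
@[simp] lemma spn_some (a : S × {t : ℝ // 0 < t}) : spn (some a : Hh S) = some a.1 := rfl

lemma h_nonneg (x : Hh S) : 0 ≤ h x := by
  cases x with
  | none => simp
  | some a => exact a.2.2.le

lemma h_pos {x : Hh S} {U : S} (hx : spn x = some U) : 0 < h x := by
  cases x with
  | none => simp [spn] at hx
  | some a => exact a.2.2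

lemma spn_eq_none_iff {x : Hh S} : spn x = none ↔ x = none := by
  cases x <;> simp [spn] <;> rfl

lemma eq_of_spn_h {x y : Hh S} (h1 : spn x = spn y) (h2 : h x = h y) : x = y := by
  cases x with
  | none =>
    cases y with
    | none => rfl
    | some b => simp [spn] at h1
  | some a =>
    cases y with
    | none => simp [spn] at h1
    | some b =>
      simp only [spn_some, Option.some.injEq] at h1
      simp only [h_some] at h2
      exact congrArg some (Prod.ext h1 (Subtype.ext h2))

lemma h_eq_zero {x : Hh S} (hx : h x = 0) : x = none := by
  cases x with
  | none => rfl
  | some a => exact absurd hx (ne_of_gt a.2.2)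

/-- Distance on the hedgehog. -/
noncomputable def d (x y : Hh S) : ℝ :=
  if spn x = spn y then |h x - h y| else h x + h y

lemma d_self (x : Hh S) : d x x = 0 := by simp [d]

lemma d_comm (x y : Hh S) : d x y = d y x := by
  unfold d
  by_cases hxy : spn x = spn y
  · rw [if_pos hxy, if_pos hxy.symm, abs_sub_comm]
  · rw [if_neg hxy, if_neg fun hc => hxy hc.symm]
    ring

lemma d_triangle (x y z : Hh S) : d x z ≤ d x y + d y z := by
  have hx := h_nonneg x; have hy := h_nonneg y; have hz := h_nonneg z
  unfold d
  by_cases h1 : spn x = spn y <;> by_cases h2 : spn y = spn z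
  · rw [if_pos (h1.trans h2), if_pos h1, if_pos h2]
    exact abs_sub_le _ _ _
  · have hxz : ¬ spn x = spn z := fun hc => h2 (h1.symm.trans hc)
    rw [if_neg hxz, if_pos h1, if_neg h2]
    have := le_abs_self (h x - h y)
    linarith
  · have hxz : ¬ spn x = spn z := fun hc => h1 (hc.trans h2.symm)
    rw [if_neg hxz, if_neg h1, if_pos h2]
    have : h z - h y ≤ |h y - h z| := by
      rw [abs_sub_comm]; exact le_abs_self _
    linarith
  · rw [if_neg h1, if_neg h2]
    by_cases hxz : spn x = spn z
    · rw [if_pos hxz]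
      have := abs_sub (h x) (h z)
      rw [abs_of_nonneg hx, abs_of_nonneg hz] at this
      linarith
    · rw [if_neg hxz]; linarith

lemma d_eq_zero {x y : Hh S} (hd : d x y = 0) : x = y := by
  unfold d at hd
  by_cases hxy : spn x = spn y
  · rw [if_pos hxy] at hd
    exact eq_of_spn_h hxy (by linarith [abs_eq_zero.1 hd])
  · rw [if_neg hxy] at hd
    have hx := h_nonneg x; have hy := h_nonneg y
    have : x = none := h_eq_zero (by linarith)
    have : y = none := h_eq_zero (by linarith)
    simp_all

noncomputable instance : MetricSpace (Hh S) where
  dist := d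
  dist_self := d_self
  dist_comm := d_comm
  dist_triangle := d_triangle
  eq_of_dist_eq_zero := d_eq_zero

lemma dist_def (x y : Hh S) :
    dist x y = if spn x = spn y then |h x - h y| else h x + h y := rfl

lemma spn_eq_of_dist_lt {x y : Hh S} (hd : dist x y < h y) : spn x = spn y := by
  by_contra hne
  rw [dist_def, if_neg hne] at hd
  linarith [h_nonneg x]

/-- The point at height `t` on spine `u` (the center if `t ≤ 0`). -/
noncomputable def toSpine (u : S) (t : ℝ) : Hh S :=
  if ht : 0 < t then some (u, ⟨t, ht⟩) else none

lemma spn_toSpine (u : S) (t : ℝ) :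
    spn (toSpine u t) = if 0 < t then some u else none := by
  by_cases ht : 0 < t
  · have e : toSpine u t = (some (u, ⟨t, ht⟩) : Hh S) := dif_pos ht
    rw [e, if_pos ht] <;> rfl
  · have e : toSpine u t = (none : Hh S) := dif_neg ht
    rw [e, if_neg ht] <;> rfl

lemma h_toSpine (u : S) (t : ℝ) :
    h (toSpine u t) = if 0 < t then t else 0 := by
  by_cases ht : 0 < t
  · have e : toSpine u t = (some (u, ⟨t, ht⟩) : Hh S) := dif_pos ht
    rw [e, if_pos ht] <;> rfl
  · have e : toSpine u t = (none : Hh S) := dif_neg ht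
    rw [e, if_neg ht] <;> rfl

lemma lipschitz_toSpine (u : S) : LipschitzWith 1 (toSpine u) := by
  apply LipschitzWith.of_dist_le_mul
  intro x y
  rw [NNReal.coe_one, one_mul, Real.dist_eq, dist_def, spn_toSpine, spn_toSpine,
    h_toSpine, h_toSpine]
  by_cases hx : 0 < x <;> by_cases hy : 0 < y
  · simp [hx, hy]
  · rw [if_pos hx, if_pos hx, if_neg hy, if_neg hy, if_neg (by simp)]
    push_neg at hy
    rw [abs_of_nonneg (by linarith)]
    linarith
  · rw [if_neg hx, if_neg hx, if_pos hy, if_pos hy, if_neg (by simp)]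
    push_neg at hx
    rw [abs_sub_comm, abs_of_nonneg (by linarith)]
    linarith
  · simp [hx, hy]

/-- `toSpine` with an optional spine. -/
noncomputable def toSpine' (o : Option S) (t : ℝ) : Hh S :=
  Option.elim o none fun u => toSpine u t

@[simp] lemma toSpine'_none (t : ℝ) : toSpine' (none : Option S) t = none := rfl
@[simp] lemma toSpine'_some (u : S) (t : ℝ) : toSpine' (some u) t = toSpine u t := rfl

lemma toSpine'_zero (o : Option S) : toSpine' o 0 = none := by
  cases o <;> simp [toSpine] <;> rfl

lemma toSpine'_spn_h (x : Hh S) : toSpine' (spn x) (h x) = x := by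
  cases x with
  | none => rfl
  | some a => simp [spn, h, toSpine, a.2.2]; rfl

lemma spn_toSpine' {o : Option S} {t : ℝ} {U : S}
    (hs : spn (toSpine' o t) = some U) : o = some U := by
  cases o with
  | none => simp at hs
  | some u =>
    rw [toSpine'_some, spn_toSpine] at hs
    split_ifs at hs
    simpa using hs

lemma continuous_toSpine' (o : Option S) (c : ℝ) :
    Continuous (fun l : ℝ => toSpine' o (l * c)) := by
  cases o with
  | none => exact continuous_const
  | some u =>
    exact (lipschitz_toSpine u).continuous.comp (continuous_mul_right c)

end Hh

open Hh

variable {Z : Type u} [TopologicalSpace Z]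

/-- `p` is a "marked base sequence" at `z`: every spine used by `p` is an open set
containing `z`, and every tail of the used spines contains arbitrarily small
neighborhoods of `z`. -/
def Good (p : ℕ → Hh (Set Z)) (z : Z) : Prop :=
  (∀ n U, spn (p n) = some U → IsOpen U ∧ z ∈ U) ∧
  (∀ W ∈ 𝓝 z, ∀ N : ℕ, ∃ n, N ≤ n ∧ ∃ U, spn (p n) = some U ∧ U ⊆ W)

lemma Good.unique [T1Space Z] {p : ℕ → Hh (Set Z)} {z z' : Z}
    (h1 : Good p z) (h2 : Good p z') : z = z' := by
  by_contra hne
  obtain ⟨n, -, U, hU, hsub⟩ := h1.2 {z'}ᶜ (compl_singleton_mem_nhds hne) 0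
  exact hsub ((h2.1 n U hU).2) rfl

/-- The underlying set of the connected metrizable space mapping onto `Z`. -/
def Mset (Z : Type u) [TopologicalSpace Z] : Set (ℕ → Hh (Set Z)) := {p | ∃ z, Good p z}

/-- The canonical map to `Z`. -/
noncomputable def gfun [Nonempty Z] (p : ℕ → Hh (Set Z)) : Z :=
  if hp : ∃ z, Good p z then hp.choose else Classical.arbitrary Z

lemma good_gfun [Nonempty Z] {p : ℕ → Hh (Set Z)} (hp : p ∈ Mset Z) : Good p (gfun p) := by
  have hp' : ∃ z, Good p z := hp
  rw [gfun, dif_pos hp']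
  exact hp'.choose_spec

lemma gfun_eq [Nonempty Z] [T1Space Z] {p : ℕ → Hh (Set Z)} {z : Z}
    (hp : Good p z) : gfun p = z :=
  Good.unique (good_gfun ⟨z, hp⟩) hp

lemma exists_good [FirstCountableTopology Z] (z : Z) : ∃ p, Good p z := by
  obtain ⟨B, hB⟩ := (𝓝 z).exists_antitone_basis
  refine ⟨fun n => toSpine (interior (B n)) 1, ?_, ?_⟩
  · intro n U hU
    rw [spn_toSpine, if_pos one_pos, Option.some.injEq] at hU
    exact hU ▸ ⟨isOpen_interior, mem_interior_iff_mem_nhds.2 (hB.1.mem_of_mem trivial)⟩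
  · intro W hW N
    obtain ⟨n, -, hn⟩ := hB.1.mem_iff.1 hW
    refine ⟨max N n, le_max_left _ _, interior (B (max N n)),
      by rw [spn_toSpine, if_pos one_pos], ?_⟩
    exact interior_subset.trans ((hB.antitone (le_max_right N n)).trans hn)

lemma continuous_gfun [Nonempty Z] [T1Space Z] :
    Continuous (fun p : Mset Z => gfun (p : ℕ → Hh (Set Z))) := by
  rw [continuous_iff_continuousAt]
  rintro ⟨p, hp⟩
  rw [ContinuousAt, Filter.tendsto_def]
  intro W hW
  have hgood := good_gfun hp
  obtain ⟨n, -, U, hU, hUW⟩ := hgood.2 W hW 0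
  have hpos : 0 < h (p n) := h_pos hU
  have hc : Continuous (fun q : Mset Z => (q : ℕ → Hh (Set Z)) n) :=
    (continuous_apply n).comp continuous_subtype_val
  have hball : (fun q : Mset Z => (q : ℕ → Hh (Set Z)) n) ⁻¹' Metric.ball (p n) (h (p n)) ∈
      𝓝 (⟨p, hp⟩ : Mset Z) :=
    hc.continuousAt.preimage_mem_nhds (Metric.ball_mem_nhds _ hpos)
  refine Filter.mem_of_superset hball ?_
  rintro ⟨q, hq⟩ hdq
  have hspn : spn (q n) = some U := (spn_eq_of_dist_lt hdq).trans hU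
  exact hUW ((good_gfun hq).1 n U hspn).2

lemma key_open [Nonempty Z] [T1Space Z] [FirstCountableTopology Z]
    {O : Set (ℕ → Hh (Set Z))} (hO : IsOpen O) : IsOpen (gfun '' (Mset Z ∩ O)) := by
  classical
  rw [isOpen_iff_mem_nhds]
  rintro z0 ⟨p, ⟨hpM, hpO⟩, rfl⟩
  have hgood : Good p (gfun p) := good_gfun hpM
  have hmem : O ∈ 𝓝 p := hO.mem_nhds hpO
  rw [nhds_pi, Filter.mem_pi] at hmem
  obtain ⟨I, hIfin, tt, htt, hsub⟩ := hmem
  have heps : ∀ i, ∃ ε : ℝ, 0 < ε ∧ Metric.ball (p i) ε ⊆ tt i := fun i => by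
    rcases Metric.mem_nhds_iff.1 (htt i) with ⟨ε, hε, hb⟩
    exact ⟨ε, hε, hb⟩
  choose ε hεpos hεball using heps
  have hVopen : IsOpen (⋂ i ∈ I, ⋂₀ {U | spn (p i) = some U ∧ ε i ≤ h (p i)}) := by
    apply hIfin.isOpen_biInter
    intro i _
    have hss : {U : Set Z | spn (p i) = some U ∧ ε i ≤ h (p i)}.Subsingleton := by
      intro U1 h1 U2 h2
      exact Option.some_injective _ (h1.1.symm.trans h2.1)
    exact hss.finite.isOpen_sInter fun U hU => (hgood.1 i U hU.1).1
  have hzV : gfun p ∈ ⋂ i ∈ I, ⋂₀ {U | spn (p i) = some U ∧ ε i ≤ h (p i)} := by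
    apply mem_biInter
    intro i _
    exact mem_sInter.2 fun U hU => (hgood.1 i U hU.1).2
  refine Filter.mem_of_superset (hVopen.mem_nhds hzV) ?_
  intro z' hz'
  have hz'' : ∀ i ∈ I, ∀ U, spn (p i) = some U → ε i ≤ h (p i) → z' ∈ U := by
    intro i hi U hU hle
    exact mem_sInter.1 (mem_iInter₂.1 hz' i hi) U ⟨hU, hle⟩
  obtain ⟨B, hB⟩ := (𝓝 z').exists_antitone_basis
  obtain ⟨m, hm⟩ := hIfin.bddAbove
  set q : ℕ → Hh (Set Z) := fun i =>
    if i ∈ I then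
      (if ∃ U, spn (p i) = some U ∧ ε i ≤ h (p i) then p i else none)
    else toSpine (interior (B i)) 1 with hq
  have hqgood : Good q z' := by
    constructor
    · intro i U hU
      by_cases hi : i ∈ I
      · rw [hq] at hU
        simp only [if_pos hi] at hU
        by_cases hc : ∃ U', spn (p i) = some U' ∧ ε i ≤ h (p i)
        · have e : (if ∃ U', spn (p i) = some U' ∧ ε i ≤ h (p i) then p i else none) = p i := if_pos hc
          rw [e] at hU
          refine ⟨(hgood.1 i U hU).1, ?_⟩
          obtain ⟨U', hs, hle⟩ := hc
          exact hz'' i hi U hU hle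
        · have e : (if ∃ U', spn (p i) = some U' ∧ ε i ≤ h (p i) then p i else none) = none := if_neg hc
          rw [e] at hU
          simp at hU
      · rw [hq] at hU
        simp only [if_neg hi] at hU
        rw [spn_toSpine, if_pos one_pos, Option.some.injEq] at hU
        exact hU ▸ ⟨isOpen_interior, mem_interior_iff_mem_nhds.2 (hB.1.mem_of_mem trivial)⟩
    · intro W hW N
      obtain ⟨n, -, hn⟩ := hB.1.mem_iff.1 hW
      set k := max (max N n) (m + 1) with hk
      have hkI : k ∉ I := fun hmem => by
        have h1 : k ≤ m := hm hmem
        have h2 : m + 1 ≤ k := le_max_right _ _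
        omega
      refine ⟨k, le_trans (le_max_left N n) (le_max_left _ _), interior (B k), ?_, ?_⟩
      · rw [hq]
        simp only [if_neg hkI]
        rw [spn_toSpine, if_pos one_pos]
      · have hnk : n ≤ k := le_trans (le_max_right N n) (le_max_left _ _)
        exact interior_subset.trans ((hB.antitone hnk).trans hn)
  have hqI : ∀ i ∈ I, q i ∈ tt i := by
    intro i hi
    apply hεball i
    rw [Metric.mem_ball, hq]
    simp only [if_pos hi]
    by_cases hc : ∃ U', spn (p i) = some U' ∧ ε i ≤ h (p i)
    · have e : (if ∃ U', spn (p i) = some U' ∧ ε i ≤ h (p i) then p i else none) = p i := if_pos hc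
      rw [e, dist_self]
      exact hεpos i
    · have e : (if ∃ U', spn (p i) = some U' ∧ ε i ≤ h (p i) then p i else none) = none := if_neg hc
      rw [e]
      cases hs : spn (p i) with
      | none =>
        rw [spn_eq_none_iff.1 hs]
        exact (dist_self _).trans_lt (hεpos i)
      | some U =>
        have hlt : h (p i) < ε i := by
          by_contra hge
          exact hc ⟨U, hs, le_of_not_gt hge⟩
        refine (dist_def _ _).trans_lt ?_
        rw [if_neg (by rw [spn_none, hs]; simp), h_none, zero_add]
        exact hlt
  exact ⟨q, ⟨⟨z', hqgood⟩, hsub fun i hi => hqI i hi⟩, gfun_eq hqgood⟩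

/-- The fiber of `gfun` over `z`. -/
def Fib (Z : Type u) [TopologicalSpace Z] (z : Z) : Set (ℕ → Hh (Set Z)) := {p | Good p z}

lemma update_good {z : Z} {p : ℕ → Hh (Set Z)} (hp : Good p z) (k : ℕ) {v : Hh (Set Z)}
    (hv : ∀ U, spn v = some U → IsOpen U ∧ z ∈ U) : Good (Function.update p k v) z := by
  constructor
  · intro i U hU
    rcases eq_or_ne i k with rfl | hik
    · rw [Function.update_self] at hU
      exact hv U hU
    · rw [Function.update_of_ne hik] at hU
      exact hp.1 i U hU
  · intro W hW N
    obtain ⟨n, hn, U, hU, hUW⟩ := hp.2 W hW (max N (k + 1))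
    have hkn : k + 1 ≤ n := le_trans (le_max_right _ _) hn
    refine ⟨n, le_trans (le_max_left _ _) hn, U, ?_, hUW⟩
    rwa [Function.update_of_ne (by omega : n ≠ k)]

lemma seg_exists {z : Z} {r : ℕ → Hh (Set Z)} (hr : Good r z) (k : ℕ) {j : Hh (Set Z)}
    (hj : ∀ U, spn j = some U → IsOpen U ∧ z ∈ U) :
    ∃ C : Set (ℕ → Hh (Set Z)), C ⊆ Fib Z z ∧ IsPreconnected C ∧ r ∈ C ∧
      Function.update r k j ∈ C := by
  classical
  have hcont : ∀ (o : Option (Set Z)) (c : ℝ),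
      Continuous (fun l : ℝ => Function.update r k (toSpine' o (l * c))) := by
    intro o c
    apply continuous_pi
    intro i
    rcases eq_or_ne i k with rfl | hik
    · simpa only [Function.update_self] using continuous_toSpine' o c
    · simp only [Function.update_of_ne hik]
      exact continuous_const
  set fA : ℝ → (ℕ → Hh (Set Z)) :=
    fun l => Function.update r k (toSpine' (spn (r k)) (l * h (r k))) with hfA
  set fB : ℝ → (ℕ → Hh (Set Z)) :=
    fun l => Function.update r k (toSpine' (spn j) (l * h j)) with hfB
  set A : Set (ℕ → Hh (Set Z)) := fA '' Icc 0 1 with hA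
  set B : Set (ℕ → Hh (Set Z)) := fB '' Icc 0 1 with hB
  have hAsub : A ⊆ Fib Z z := by
    rintro _ ⟨l, -, rfl⟩
    exact update_good hr k fun U hs => hr.1 k U (spn_toSpine' hs)
  have hBsub : B ⊆ Fib Z z := by
    rintro _ ⟨l, -, rfl⟩
    exact update_good hr k fun U hs => hj U (spn_toSpine' hs)
  have hw0A : Function.update r k none ∈ A :=
    ⟨0, ⟨le_refl 0, zero_le_one⟩, by rw [hfA]; simp [toSpine'_zero]⟩
  have hw0B : Function.update r k none ∈ B :=
    ⟨0, ⟨le_refl 0, zero_le_one⟩, by rw [hfB]; simp [toSpine'_zero]⟩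
  have hApc : IsPreconnected A := isPreconnected_Icc.image fA (hcont _ _).continuousOn
  have hBpc : IsPreconnected B := isPreconnected_Icc.image fB (hcont _ _).continuousOn
  refine ⟨A ∪ B, union_subset hAsub hBsub,
    IsPreconnected.union _ hw0A hw0B hApc hBpc, ?_, ?_⟩
  · left
    refine ⟨1, ⟨zero_le_one, le_refl 1⟩, ?_⟩
    rw [hfA]
    simp only [one_mul, toSpine'_spn_h]
    exact Function.update_eq_self k r
  · right
    refine ⟨1, ⟨zero_le_one, le_refl 1⟩, ?_⟩
    rw [hfB]
    simp only [one_mul, toSpine'_spn_h]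

lemma exists_preconnected_pair {z : Z} {p m : ℕ → Hh (Set Z)}
    (hp : Good p z) (hm : Good m z) :
    ∃ T, T ⊆ Fib Z z ∧ IsPreconnected T ∧ p ∈ T ∧ m ∈ T := by
  classical
  set pk : ℕ → (ℕ → Hh (Set Z)) := fun K n => if n < K then m n else p n with hpkdef
  have hpk : ∀ K, Good (pk K) z := by
    intro K
    constructor
    · intro i U hU
      by_cases hi : i < K
      · exact hm.1 i U (by simpa [hpkdef, hi] using hU)
      · exact hp.1 i U (by simpa [hpkdef, hi] using hU)
    · intro W hW N
      obtain ⟨n, hn, U, hU, hUW⟩ := hp.2 W hW (max N K)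
      have hKn : K ≤ n := le_trans (le_max_right _ _) hn
      refine ⟨n, le_trans (le_max_left _ _) hn, U, ?_, hUW⟩
      have : ¬ n < K := by omega
      simpa [hpkdef, this] using hU
  have hupdate : ∀ K, Function.update (pk K) K (m K) = pk (K + 1) := by
    intro K
    funext n
    rcases eq_or_ne n K with rfl | hn
    · rw [Function.update_self]
      simp [hpkdef]
    · rw [Function.update_of_ne hn]
      by_cases h1 : n < K
      · simp [hpkdef, h1, show n < K + 1 by omega]
      · simp [hpkdef, h1, show ¬ n < K + 1 by omega]
  choose C hCsub hCconn hCmem1 hCmem2 using fun K =>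
    seg_exists (hpk K) K (fun U hU => hm.1 K U hU)
  set E : Set (ℕ → Hh (Set Z)) := ⋃ K, C K with hE
  have hEpc : IsPreconnected E := by
    apply IsPreconnected.iUnion_of_chain hCconn
    intro K
    refine ⟨pk (K + 1), ?_, ?_⟩
    · rw [← hupdate K]
      exact hCmem2 K
    · have : Order.succ K = K + 1 := rfl
      rw [this]
      exact hCmem1 (K + 1)
  have hEsub : E ⊆ Fib Z z := iUnion_subset hCsub
  have hp0 : pk 0 = p := by
    funext n
    simp [hpkdef]
  have hpE : p ∈ E := hp0 ▸ mem_iUnion.2 ⟨0, hCmem1 0⟩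
  have htend : Filter.Tendsto pk Filter.atTop (𝓝 m) := by
    rw [tendsto_pi_nhds]
    intro n
    apply tendsto_atTop_of_eventually_const (i₀ := n + 1)
    intro K hK
    simp [hpkdef, show n < K by omega]
  have hmcl : m ∈ closure E :=
    mem_closure_of_tendsto htend (Filter.Eventually.of_forall fun K =>
      mem_iUnion.2 ⟨K, hCmem1 K⟩)
  refine ⟨insert m E, insert_subset hm hEsub, ?_, mem_insert_iff.2 (Or.inr hpE),
    mem_insert _ _⟩
  exact hEpc.subset_closure (subset_insert _ _)
    (insert_subset hmcl subset_closure)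

lemma fib_preconnected (z : Z) : IsPreconnected (Fib Z z) := by
  classical
  apply isPreconnected_of_forall_pair
  intro p hp q hq
  set m : ℕ → Hh (Set Z) := fun n => if n % 2 = 0 then p (n / 2) else q (n / 2) with hmdef
  have hm : Good m z := by
    constructor
    · intro i U hU
      by_cases hi : i % 2 = 0
      · exact hp.1 (i / 2) U (by simpa [hmdef, hi] using hU)
      · exact hq.1 (i / 2) U (by simpa [hmdef, hi] using hU)
    · intro W hW N
      obtain ⟨n, hn, U, hU, hUW⟩ := hp.2 W hW N
      refine ⟨2 * n, by omega, U, ?_, hUW⟩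
      have h1 : (2 * n) % 2 = 0 := by omega
      have h2 : (2 * n) / 2 = n := by omega
      simpa [hmdef, h1, h2] using hU
  obtain ⟨T1, hT1sub, hT1conn, hpT1, hmT1⟩ := exists_preconnected_pair hp hm
  obtain ⟨T2, hT2sub, hT2conn, hqT2, hmT2⟩ := exists_preconnected_pair hq hm
  exact ⟨T1 ∪ T2, union_subset hT1sub hT2sub, Or.inl hpT1, Or.inr hqT2,
    IsPreconnected.union m hmT1 hmT2 hT1conn hT2conn⟩

lemma mset_preconnected [Nonempty Z] [T1Space Z] [FirstCountableTopology Z]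
    [PreconnectedSpace Z] : IsPreconnected (Mset Z) := by
  intro u v hu hv hcov ⟨x, hxM, hxu⟩ ⟨y, hyM, hyv⟩
  have hDu : IsOpen (gfun '' (Mset Z ∩ u)) := key_open hu
  have hDv : IsOpen (gfun '' (Mset Z ∩ v)) := key_open hv
  have hcover : (univ : Set Z) ⊆ (gfun '' (Mset Z ∩ u)) ∪ (gfun '' (Mset Z ∩ v)) := by
    intro z _
    obtain ⟨p, hp⟩ := exists_good z
    have hpM : p ∈ Mset Z := ⟨z, hp⟩
    rcases hcov hpM with hcase | hcase
    · exact Or.inl ⟨p, ⟨hpM, hcase⟩, gfun_eq hp⟩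
    · exact Or.inr ⟨p, ⟨hpM, hcase⟩, gfun_eq hp⟩
  have hne1 : (univ ∩ (gfun '' (Mset Z ∩ u))).Nonempty :=
    ⟨gfun x, mem_univ _, ⟨x, ⟨hxM, hxu⟩, rfl⟩⟩
  have hne2 : (univ ∩ (gfun '' (Mset Z ∩ v))).Nonempty :=
    ⟨gfun y, mem_univ _, ⟨y, ⟨hyM, hyv⟩, rfl⟩⟩
  obtain ⟨z0, -, ⟨a, ⟨haM, hau⟩, haz⟩, ⟨b, ⟨hbM, hbv⟩, hbz⟩⟩ :=
    isPreconnected_univ _ _ hDu hDv hcover hne1 hne2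
  have ha : Good a z0 := haz ▸ good_gfun haM
  have hb : Good b z0 := hbz ▸ good_gfun hbM
  have h1 : Fib Z z0 ⊆ u ∪ v := fun r hr => hcov ⟨z0, hr⟩
  obtain ⟨w, hwF, hwuv⟩ :=
    fib_preconnected z0 u v hu hv h1 ⟨a, ha, hau⟩ ⟨b, hb, hbv⟩
  exact ⟨w, ⟨z0, hwF⟩, hwuv⟩

end Statement11Aux

open Statement11Aux

theorem statement11 {Z : Type u} [TopologicalSpace Z] [T1Space Z] :
    (ConnectedSpace Z ∧ FirstCountableTopology Z) ↔
      ∃ (M : Type u) (tM : TopologicalSpace M),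
        @TopologicalSpace.MetrizableSpace M tM ∧ @ConnectedSpace M tM ∧
          ∃ g : M → Z, Function.Surjective g ∧
            @Continuous M Z tM _ g ∧ @IsOpenMap M Z tM _ g := by
  constructor
  · rintro ⟨hconn, hfc⟩
    haveI := hconn
    haveI := hfc
    haveI : Nonempty Z := hconn.toNonempty
    haveI hmetrPi : MetrizableSpace (ℕ → Hh (Set Z)) := UniformSpace.metrizableSpace
    have hMne : (Mset Z).Nonempty := by
      obtain ⟨p, hp⟩ := exists_good (Classical.arbitrary Z)
      exact ⟨p, ⟨_, hp⟩⟩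
    refine ⟨↥(Mset Z), inferInstance, inferInstance,
      Subtype.connectedSpace ⟨hMne, mset_preconnected⟩,
      fun x => gfun (x : ℕ → Hh (Set Z)), ?_, continuous_gfun, ?_⟩
    · intro z
      obtain ⟨p, hp⟩ := exists_good z
      exact ⟨⟨p, ⟨z, hp⟩⟩, gfun_eq hp⟩
    · intro O hO
      obtain ⟨O', hO', rfl⟩ := isOpen_induced_iff.1 hO
      have himg : (fun x : ↥(Mset Z) => gfun (x : ℕ → Hh (Set Z))) ''
          (Subtype.val ⁻¹' O') = gfun '' (Mset Z ∩ O') := by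
        ext z'
        constructor
        · rintro ⟨⟨p, hpM⟩, hpO, rfl⟩
          exact ⟨p, ⟨hpM, hpO⟩, rfl⟩
        · rintro ⟨p, ⟨hpM, hpO⟩, rfl⟩
          exact ⟨⟨p, hpM⟩, hpO, rfl⟩
      rw [himg]
      exact key_open hO'
  · rintro ⟨M, tM, hMet, hConn, g, hsurj, hcont, hopen⟩
    haveI := hMet
    haveI := hConn
    constructor
    · have hpre : IsPreconnected (range g) := by
        have := (isPreconnected_univ (α := M)).image g hcont.continuousOn
        rwa [image_univ] at this
      rw [hsurj.range_eq] at hpre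
      exact { toPreconnectedSpace := ⟨hpre⟩,
              toNonempty := Nonempty.map g hConn.toNonempty }
    · constructor
      intro z
      obtain ⟨m, rfl⟩ := hsurj z
      have hmap : 𝓝 (g m) = Filter.map g (𝓝 m) :=
        le_antisymm (hopen.nhds_le m) hcont.continuousAt
      rw [hmap]
      infer_instance
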